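/- Let ε be a standard exponential random variable and β a Beta(1/2,1/2) (arcsine) random variable, independent. Then for all λ ≥ 0: ∫₀^∞ (1 − e^{−λx}) (1/x) E[e^{−x/β}] dx = 2(log(√(1+λ) + 1) − log 2). Consequently, exp(−t ∫₀^∞ (1 − e^{−λx}) (1/x) E[e^{−x/β}] dx) = (2/(1 + √(1+λ)))^{2t}. -/

import Mathlib

open MeasureTheory Set Real Function

noncomputable def phi (t : ℝ) : ℝ := 1 - (1 + t^2)⁻¹

lemma phi_hasDeriv (t : ℝ) : HasDerivAt phi (2*t/(1+t^2)^2) t := by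
  have h1 : (0:ℝ) < 1 + t^2 := by positivity
  have : HasDerivAt (fun t : ℝ => 1 + t^2) (2*t) t := by
    simpa using (hasDerivAt_pow 2 t).const_add 1
  have h2 := this.inv h1.ne'
  have h3 := h2.neg.const_add 1
  refine h3.congr_deriv ?_
  field_simp

lemma phi_injOn : InjOn phi (Ioi 0) := by
  intro a ha b hb h
  have ha' : (0:ℝ) < a := ha
  have hb' : (0:ℝ) < b := hb
  have h1 : (0:ℝ) < 1 + a^2 := by positivity
  have h2 : (0:ℝ) < 1 + b^2 := by positivity
  have : (1 + a^2)⁻¹ = (1 + b^2)⁻¹ := by unfold phi at h; linarith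
  have hab : a^2 = b^2 := by
    have h4 := inv_inj.mp this; linarith
  exact le_antisymm (by nlinarith) (by nlinarith)

lemma phi_image : phi '' (Ioi 0) = Ioo (0:ℝ) 1 := by
  ext v
  constructor
  · rintro ⟨t, ht, rfl⟩
    have ht' : (0:ℝ) < t := ht
    have h1 : (0:ℝ) < 1 + t^2 := by positivity
    constructor
    · have : (1 + t^2)⁻¹ < 1 := by
        rw [inv_lt_one_iff₀]; right; nlinarith
      unfold phi; linarith
    · have : (0:ℝ) < (1 + t^2)⁻¹ := by positivity
      unfold phi; linarith
  · rintro ⟨hv0, hv1⟩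
    refine ⟨Real.sqrt (v / (1 - v)), ?_, ?_⟩
    · have : 0 < v / (1 - v) := div_pos hv0 (by linarith)
      exact Real.sqrt_pos.mpr this
    · have h1v : (0:ℝ) < 1 - v := by linarith
      have : Real.sqrt (v / (1 - v)) ^ 2 = v / (1 - v) :=
        Real.sq_sqrt (le_of_lt (div_pos hv0 h1v))
      unfold phi
      rw [this]
      field_simp
      ring

lemma int_aux_integrable {a : ℝ} (ha : 1 ≤ a) :
    IntegrableOn (fun t => 2/(π*(1+a*t^2))) (Ioi (0:ℝ)) := by
  have ha0 : (0:ℝ) < a := by linarith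
  apply ((integrable_inv_one_add_sq.const_mul (2/π)).mono' ?_ ?_).integrableOn
  · exact (Continuous.div continuous_const (by continuity) (fun t => by positivity)).aestronglyMeasurable
  · filter_upwards with t
    have h1 : (0:ℝ) < 1 + t^2 := by positivity
    have h2 : (0:ℝ) < 1 + a*t^2 := by positivity
    rw [Real.norm_eq_abs, abs_of_nonneg (by positivity),
      show 2/π * (1+t^2)⁻¹ = 2/(π*(1+t^2)) by
        rw [div_mul_eq_mul_div, div_eq_div_iff (by positivity) (by positivity), mul_comm π (1+t^2),
          ← mul_assoc, mul_assoc 2, inv_mul_cancel₀ h1.ne', mul_one]]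
    apply div_le_div_of_nonneg_left (by norm_num) (by positivity)
    nlinarith [mul_nonneg (mul_nonneg Real.pi_pos.le (by linarith : (0:ℝ) ≤ a - 1)) (sq_nonneg t)]

lemma int_aux {a : ℝ} (ha : 1 ≤ a) :
    ∫ t in Ioi (0:ℝ), 2/(π*(1+a*t^2)) = (Real.sqrt a)⁻¹ := by
  have ha0 : (0:ℝ) < a := by linarith
  have hsa : (0:ℝ) < Real.sqrt a := Real.sqrt_pos.mpr ha0
  have hsq : Real.sqrt a ^ 2 = a := Real.sq_sqrt ha0.le
  set F : ℝ → ℝ := fun t => 2/(π*Real.sqrt a) * Real.arctan (Real.sqrt a * t) with hF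
  have hderiv : ∀ t, HasDerivAt F (2/(π*(1+a*t^2))) t := by
    intro t
    have h1 : HasDerivAt (fun t : ℝ => Real.sqrt a * t) (Real.sqrt a) t := by
      simpa using (hasDerivAt_id t).const_mul (Real.sqrt a)
    have h2 := (Real.hasDerivAt_arctan (Real.sqrt a * t)).comp t h1
    have h3 := h2.const_mul (2/(π*Real.sqrt a))
    refine h3.congr_deriv ?_
    have : (Real.sqrt a * t)^2 = a * t^2 := by rw [mul_pow, hsq]
    rw [this]
    field_simp
  have htend : Filter.Tendsto F Filter.atTop (nhds ((Real.sqrt a)⁻¹)) := by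
    have h1 : Filter.Tendsto (fun t : ℝ => Real.sqrt a * t) Filter.atTop Filter.atTop :=
      Filter.Tendsto.const_mul_atTop hsa Filter.tendsto_id
    have h2 := (Real.tendsto_arctan_atTop.comp h1)
    have h2' : Filter.Tendsto (fun t : ℝ => Real.arctan (Real.sqrt a * t)) Filter.atTop (nhds (π/2)) :=
      tendsto_nhds_of_tendsto_nhdsWithin h2
    have h3 := h2'.const_mul (2/(π*Real.sqrt a))
    convert h3 using 2
    field_simp
  have := integral_Ioi_of_hasDerivAt_of_tendsto' (f := F) (f' := fun t => 2/(π*(1+a*t^2)))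
    (fun t _ => hderiv t) (int_aux_integrable ha) htend
  rw [this, hF]
  simp

lemma pointwise_sub {s : ℝ} (hs : 0 ≤ s) {t : ℝ} (ht : t ∈ Ioi (0:ℝ)) :
    |2*t/(1+t^2)^2| • ((1/(π * Real.sqrt (phi t * (1 - phi t)))) * (1+s*phi t)⁻¹)
      = 2/(π*(1+(1+s)*t^2)) := by
  have ht' : (0:ℝ) < t := ht
  have h1 : (0:ℝ) < 1 + t^2 := by positivity
  have hphi : phi t = t^2/(1+t^2) := by
    unfold phi; field_simp; ring
  have h2 : phi t * (1 - phi t) = (t/(1+t^2))^2 := by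
    rw [hphi]; field_simp; ring
  have h3 : Real.sqrt (phi t * (1-phi t)) = t/(1+t^2) := by
    rw [h2, Real.sqrt_sq (by positivity)]
  have h4 : 1 + s * phi t = (1+(1+s)*t^2)/(1+t^2) := by
    rw [hphi]; field_simp; ring
  have h5 : (0:ℝ) < 1+(1+s)*t^2 := by positivity
  rw [smul_eq_mul, abs_of_nonneg (by positivity), h3, h4]
  field_simp

lemma arcsine_transform {s : ℝ} (hs : 0 ≤ s) :
    ∫ u in Ioo (0:ℝ) 1, (1/(π * Real.sqrt (u*(1-u)))) * (1+s*u)⁻¹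
      = (Real.sqrt (1+s))⁻¹ := by
  rw [← phi_image, integral_image_eq_integral_abs_deriv_smul measurableSet_Ioi
    (fun t _ => (phi_hasDeriv t).hasDerivWithinAt) phi_injOn]
  rw [setIntegral_congr_fun measurableSet_Ioi (fun t ht => pointwise_sub hs ht)]
  exact int_aux (by linarith)

lemma arcsine_integrable {s : ℝ} (hs : 0 ≤ s) :
    IntegrableOn (fun u => (1/(π * Real.sqrt (u*(1-u)))) * (1+s*u)⁻¹) (Ioo (0:ℝ) 1) := by
  rw [← phi_image, integrableOn_image_iff_integrableOn_abs_deriv_smul measurableSet_Ioi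
    (fun t _ => (phi_hasDeriv t).hasDerivWithinAt) phi_injOn]
  exact (int_aux_integrable (by linarith : (1:ℝ) ≤ 1+s)).congr_fun
    (fun t ht => (pointwise_sub hs ht).symm) measurableSet_Ioi

noncomputable def g0 : ℝ → ℝ := fun u => 1/(π * Real.sqrt (u*(1-u)))

lemma g0_nonneg (u : ℝ) : 0 ≤ g0 u := by unfold g0; positivity

lemma g0_meas : Measurable g0 := by
  unfold g0; fun_prop

lemma exp_integrableOn_Ioi' {c : ℝ} (hc : 0 < c) :
    IntegrableOn (fun x => Real.exp (-(c*x))) (Ioi (0:ℝ)) := by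
  simpa [neg_mul] using exp_neg_integrableOn_Ioi 0 hc

lemma exp_hasDeriv (c x : ℝ) (hc : c ≠ 0) :
    HasDerivAt (fun x => -Real.exp (-(c*x))/c) (Real.exp (-(c*x))) x := by
  have h1 : HasDerivAt (fun x : ℝ => -(c*x)) (-c) x := by
    simpa using ((hasDerivAt_id x).const_mul c).fun_neg
  have h2 := (Real.hasDerivAt_exp (-(c*x))).comp x h1
  have h3 := (h2.neg).div_const c
  refine h3.congr_deriv ?_
  field_simp

lemma exp_integral_Ioi {c : ℝ} (hc : 0 < c) :
    ∫ x in Ioi (0:ℝ), Real.exp (-(c*x)) = c⁻¹ := by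
  have htend : Filter.Tendsto (fun x => -Real.exp (-(c*x))/c) Filter.atTop (nhds 0) := by
    have h1 : Filter.Tendsto (fun x : ℝ => -(c*x)) Filter.atTop Filter.atBot := by
      exact Filter.tendsto_neg_atTop_atBot.comp (Filter.Tendsto.const_mul_atTop hc Filter.tendsto_id)
    have h2 := (Real.tendsto_exp_atBot.comp h1).neg.div_const c
    simpa using h2
  have := integral_Ioi_of_hasDerivAt_of_tendsto'
    (f := fun x => -Real.exp (-(c*x))/c) (f' := fun x => Real.exp (-(c*x)))
    (fun x _ => exp_hasDeriv c x hc.ne') (exp_integrableOn_Ioi' hc) htend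
  rw [this]
  simp [div_eq_mul_inv]

lemma exp_integral_Ioo {x l : ℝ} (hx : 0 < x) (hl : 0 ≤ l) :
    ∫ s in Ioo (0:ℝ) l, Real.exp (-(s*x)) = (1-Real.exp (-(l*x)))/x := by
  rw [← integral_Ioc_eq_integral_Ioo, ← intervalIntegral.integral_of_le hl]
  have : ∀ s ∈ uIcc (0:ℝ) l, HasDerivAt (fun s => -Real.exp (-(x*s))/x) (Real.exp (-(s*x))) s := by
    intro s _
    have := exp_hasDeriv x s hx.ne'
    simpa [mul_comm] using this
  rw [intervalIntegral.integral_eq_sub_of_hasDerivAt this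
    ((Continuous.intervalIntegrable (by continuity) _ _))]
  field_simp
  rw [mul_zero, neg_zero, Real.exp_zero]; ring

lemma g0_integral : ∫ u in Ioo (0:ℝ) 1, g0 u = 1 := by
  have := arcsine_transform (le_refl 0)
  simpa [g0] using this

lemma g0_integrableOn : IntegrableOn g0 (Ioo (0:ℝ) 1) := by
  exact (arcsine_integrable le_rfl).congr_fun (fun u hu => by simp [g0]) measurableSet_Ioo

lemma lemmaA {s : ℝ} (hs : 0 < s) :
    ∫ u in Ioo (0:ℝ) 1, g0 u * (u/(1+s*u)) = (1 - (Real.sqrt (1+s))⁻¹)/s := by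
  have h2 : ∫ u in Ioo (0:ℝ) 1, g0 u * (1+s*u)⁻¹ = (Real.sqrt (1+s))⁻¹ := by
    have := arcsine_transform hs.le
    simpa [g0] using this
  have hgs : IntegrableOn (fun u => g0 u * (1+s*u)⁻¹) (Ioo (0:ℝ) 1) := by
    have := arcsine_integrable hs.le
    simpa [g0] using this
  calc ∫ u in Ioo (0:ℝ) 1, g0 u * (u/(1+s*u))
      = ∫ u in Ioo (0:ℝ) 1, s⁻¹ * (g0 u - g0 u * (1+s*u)⁻¹) := by
        apply setIntegral_congr_fun measurableSet_Ioo
        intro u hu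
        have h3 : 0 < 1 + s*u := by nlinarith [hu.1, hu.2]
        have h3' : 1 + u*s ≠ 0 := by linarith
        field_simp
        ring
    _ = s⁻¹ * ((∫ u in Ioo (0:ℝ) 1, g0 u) - ∫ u in Ioo (0:ℝ) 1, g0 u * (1+s*u)⁻¹) := by
        rw [integral_const_mul, integral_sub g0_integrableOn hgs]
    _ = (1 - (Real.sqrt (1+s))⁻¹)/s := by
        rw [g0_integral, h2, inv_mul_eq_div, div_eq_div_iff hs.ne' hs.ne']

lemma final_integral {l : ℝ} (hl : 0 ≤ l) :
    ∫ s in Ioo (0:ℝ) l, (1 - (Real.sqrt (1+s))⁻¹)/s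
      = 2 * (Real.log (Real.sqrt (1+l) + 1) - Real.log 2) := by
  have hcong : ∀ s ∈ Ioo (0:ℝ) l,
      (1 - (Real.sqrt (1+s))⁻¹)/s = (Real.sqrt (1+s) * (1+Real.sqrt (1+s)))⁻¹ := by
    intro s hs
    have hs0 : (0:ℝ) < s := hs.1
    have h1 : (0:ℝ) < 1 + s := by linarith
    have hr : (0:ℝ) < Real.sqrt (1+s) := Real.sqrt_pos.mpr h1
    have hr2 : Real.sqrt (1+s) ^ 2 = 1 + s := Real.sq_sqrt h1.le
    have h4 : Real.sqrt (1+s) ≠ 0 := hr.ne'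
    have h5 : (1:ℝ) + Real.sqrt (1+s) ≠ 0 := by positivity
    field_simp
    nlinarith [hr2]
  rw [setIntegral_congr_fun measurableSet_Ioo hcong, ← integral_Ioc_eq_integral_Ioo,
    ← intervalIntegral.integral_of_le hl]
  have hderiv : ∀ s ∈ uIcc (0:ℝ) l, HasDerivAt (fun s => 2*Real.log (1+Real.sqrt (1+s)))
      ((Real.sqrt (1+s) * (1+Real.sqrt (1+s)))⁻¹) s := by
    intro s hsmem
    rw [uIcc_of_le hl] at hsmem
    have hs0 : (0:ℝ) ≤ s := hsmem.1
    have h1 : (0:ℝ) < 1 + s := by linarith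
    have hr : (0:ℝ) < Real.sqrt (1+s) := Real.sqrt_pos.mpr h1
    have d1 : HasDerivAt (fun s : ℝ => 1 + s) 1 s := by
      simpa using (hasDerivAt_id s).const_add 1
    have d2 : HasDerivAt (fun s : ℝ => Real.sqrt (1+s)) (1/(2*Real.sqrt (1+s))) s := by
      have := (Real.hasDerivAt_sqrt h1.ne').comp s d1
      simpa [Function.comp_def] using this
    have d3 : HasDerivAt (fun s : ℝ => 1 + Real.sqrt (1+s)) (1/(2*Real.sqrt (1+s))) s :=
      d2.const_add 1
    have d4 := (Real.hasDerivAt_log (by positivity : (1:ℝ) + Real.sqrt (1+s) ≠ 0)).comp s d3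
    have d5 := d4.const_mul 2
    refine d5.congr_deriv ?_
    field_simp
  have hcont : IntervalIntegrable (fun s => (Real.sqrt (1+s) * (1+Real.sqrt (1+s)))⁻¹)
      volume 0 l := by
    apply ContinuousOn.intervalIntegrable
    apply ContinuousOn.inv₀
    · fun_prop
    · intro s hsmem
      rw [uIcc_of_le hl] at hsmem
      have h1 : (0:ℝ) < 1 + s := by linarith [hsmem.1]
      have hr : (0:ℝ) < Real.sqrt (1+s) := Real.sqrt_pos.mpr h1
      positivity
  rw [intervalIntegral.integral_eq_sub_of_hasDerivAt hderiv hcont]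
  have : Real.sqrt (1 + 0) = 1 := by norm_num
  rw [this]
  rw [show (1:ℝ) + 1 = 2 by norm_num, show (1:ℝ) + Real.sqrt (1+l) = Real.sqrt (1+l) + 1 by ring]
  ring

noncomputable def ff : ℝ → ℝ := fun x => ∫ u in Ioo (0:ℝ) 1, g0 u * Real.exp (-(x/u))

lemma ff_meas : StronglyMeasurable ff := by
  apply MeasureTheory.StronglyMeasurable.integral_prod_right
    (f := fun x u => g0 u * Real.exp (-(x/u)))
  apply Measurable.stronglyMeasurable
  exact (g0_meas.comp measurable_snd).mul
    (Real.measurable_exp.comp (measurable_fst.div measurable_snd).neg)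

lemma ff_nonneg (x : ℝ) : 0 ≤ ff x :=
  integral_nonneg (fun u => mul_nonneg (g0_nonneg u) (Real.exp_nonneg _))

lemma inner_integrable {x : ℝ} (hx : 0 ≤ x) :
    IntegrableOn (fun u => g0 u * Real.exp (-(x/u))) (Ioo (0:ℝ) 1) := by
  apply g0_integrableOn.mono'
  · exact ((g0_meas.mul
      (Real.measurable_exp.comp ((measurable_const.div measurable_id)).neg)).aestronglyMeasurable)
  · filter_upwards [ae_restrict_mem measurableSet_Ioo] with u hu
    have hu0 : (0:ℝ) < u := hu.1
    rw [Real.norm_eq_abs, abs_of_nonneg (mul_nonneg (g0_nonneg u) (Real.exp_nonneg _))]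
    nth_rewrite 2 [← mul_one (g0 u)]
    apply mul_le_mul_of_nonneg_left _ (g0_nonneg u)
    rw [Real.exp_le_one_iff]
    simp only [neg_nonpos]
    positivity

lemma ff_le {x : ℝ} (hx : 0 ≤ x) : ff x ≤ Real.exp (-x) := by
  have h1 : ∫ u in Ioo (0:ℝ) 1, g0 u * Real.exp (-x) = Real.exp (-x) := by
    rw [integral_mul_const, g0_integral, one_mul]
  rw [← h1]
  apply integral_mono_of_nonneg
  · filter_upwards with u
    exact mul_nonneg (g0_nonneg u) (Real.exp_nonneg _)
  · exact g0_integrableOn.mul_const _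
  · filter_upwards [ae_restrict_mem measurableSet_Ioo] with u hu
    apply mul_le_mul_of_nonneg_left _ (g0_nonneg u)
    apply Real.exp_le_exp.mpr
    rw [neg_le_neg_iff]
    rw [le_div_iff₀ hu.1]
    nlinarith [hu.2]

noncomputable def FB (s x u : ℝ) : ℝ := Real.exp (-(s*x)) * (g0 u * Real.exp (-(x/u)))

set_option maxHeartbeats 1000000 in
lemma stepB {s : ℝ} (hs : 0 < s) :
    ∫ x in Ioi (0:ℝ), Real.exp (-(s*x)) * ff x = (1 - (Real.sqrt (1+s))⁻¹)/s := by
  set μ := volume.restrict (Ioi (0:ℝ))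
  set ν := volume.restrict (Ioo (0:ℝ) 1)
  have hmeasF : Measurable (uncurry (FB s)) := by
    unfold FB uncurry
    apply ((Real.measurable_exp.comp ((measurable_const.mul measurable_fst)).neg).mul
      ((g0_meas.comp measurable_snd).mul
        (Real.measurable_exp.comp (measurable_fst.div measurable_snd).neg)))
  have hmeas : AEStronglyMeasurable (uncurry (FB s)) (μ.prod ν) :=
    hmeasF.aestronglyMeasurable
  have hint : Integrable (uncurry (FB s)) (μ.prod ν) := by
    rw [integrable_prod_iff hmeas]
    constructor
    · filter_upwards [ae_restrict_mem measurableSet_Ioi] with x hx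
      simp only [Function.uncurry_apply_pair, FB]
      exact ((inner_integrable (le_of_lt hx)).const_mul _)
    · apply Integrable.mono' (exp_integrableOn_Ioi' hs)
      · exact hmeas.norm.integral_prod_right'
      · filter_upwards [ae_restrict_mem measurableSet_Ioi] with x hx
        simp only [Function.uncurry_apply_pair]
        have hxpos : (0:ℝ) < x := hx
        have hb : ∫ u, ‖FB s x u‖ ∂ν ≤ Real.exp (-(s*x)) := by
          have h1 : ∫ u in Ioo (0:ℝ) 1, Real.exp (-(s*x)) * g0 u = Real.exp (-(s*x)) := by
            rw [integral_const_mul, g0_integral, mul_one]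
          rw [← h1]
          apply integral_mono_of_nonneg
          · filter_upwards with u; exact norm_nonneg _
          · exact g0_integrableOn.const_mul _
          · filter_upwards [ae_restrict_mem measurableSet_Ioo] with u hu
            unfold FB
            rw [Real.norm_eq_abs, abs_of_nonneg
              (mul_nonneg (Real.exp_nonneg _) (mul_nonneg (g0_nonneg u) (Real.exp_nonneg _)))]
            apply mul_le_mul_of_nonneg_left _ (Real.exp_nonneg _)
            nth_rewrite 2 [← mul_one (g0 u)]
            apply mul_le_mul_of_nonneg_left _ (g0_nonneg u)
            rw [Real.exp_le_one_iff]
            simp only [neg_nonpos]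
            exact div_nonneg hxpos.le hu.1.le
        rw [Real.norm_eq_abs, abs_of_nonneg (integral_nonneg (fun u => norm_nonneg _))]
        exact hb
  have hswap := integral_integral_swap hint
  have hL : ∫ x, ∫ u, FB s x u ∂ν ∂μ = ∫ x in Ioi (0:ℝ), Real.exp (-(s*x)) * ff x := by
    apply setIntegral_congr_fun measurableSet_Ioi
    intro x hx
    unfold FB
    dsimp only
    rw [integral_const_mul]
    rfl
  have hR : ∫ u, ∫ x, FB s x u ∂μ ∂ν = (1 - (Real.sqrt (1+s))⁻¹)/s := by
    rw [← lemmaA hs]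
    apply setIntegral_congr_fun measurableSet_Ioo
    intro u hu
    have hu0 : (0:ℝ) < u := hu.1
    have hsu : (0:ℝ) < s + 1/u := by positivity
    have hpt : ∀ x : ℝ, FB s x u = g0 u * Real.exp (-((s+1/u)*x)) := by
      intro x
      unfold FB
      rw [← mul_assoc, mul_comm (Real.exp _) (g0 u), mul_assoc, ← Real.exp_add]
      congr 2
      ring
    simp only [hpt]
    rw [integral_const_mul, exp_integral_Ioi hsu]
    congr 1
    rw [inv_eq_one_div, div_eq_div_iff hsu.ne' (by positivity : ((1:ℝ)+s*u) ≠ 0)]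
    field_simp
    ring
  rw [← hL, hswap, hR]

noncomputable def FA (x s : ℝ) : ℝ := Real.exp (-(s*x)) * ff x

set_option maxHeartbeats 1000000 in
lemma stepA {l : ℝ} (hl : 0 ≤ l) :
    ∫ x in Ioi (0:ℝ), (1 - Real.exp (-(l*x))) * (1/x) * ff x
      = ∫ s in Ioo (0:ℝ) l, ∫ x in Ioi (0:ℝ), Real.exp (-(s*x)) * ff x := by
  set μ := volume.restrict (Ioi (0:ℝ))
  set ν := volume.restrict (Ioo (0:ℝ) l)
  have hmeasF : Measurable (uncurry FA) := by
    unfold FA uncurry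
    exact (Real.measurable_exp.comp ((measurable_snd.mul measurable_fst)).neg).mul
      (ff_meas.measurable.comp measurable_fst)
  have hmeas : AEStronglyMeasurable (uncurry FA) (μ.prod ν) := hmeasF.aestronglyMeasurable
  have hint : Integrable (uncurry FA) (μ.prod ν) := by
    rw [integrable_prod_iff hmeas]
    constructor
    · filter_upwards [ae_restrict_mem measurableSet_Ioi] with x hx
      simp only [Function.uncurry_apply_pair, FA]
      apply IntegrableOn.mono_set _ Ioo_subset_Ioc_self
      apply Continuous.integrableOn_Ioc
      exact (Real.continuous_exp.comp ((continuous_id.mul continuous_const)).neg).mul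
        continuous_const
    · apply Integrable.mono' ((exp_integrableOn_Ioi' one_pos).mul_const l)
      · exact hmeas.norm.integral_prod_right'
      · filter_upwards [ae_restrict_mem measurableSet_Ioi] with x hx
        simp only [Function.uncurry_apply_pair]
        have hxpos : (0:ℝ) < x := hx
        have hb : ∫ s, ‖FA x s‖ ∂ν ≤ Real.exp (-(1*x)) * l := by
          have h1 : ∫ s in Ioo (0:ℝ) l, Real.exp (-x) = Real.exp (-x) * l := by
            rw [setIntegral_const, smul_eq_mul, measureReal_def, Real.volume_Ioo, mul_comm]
            rw [ENNReal.toReal_ofReal (by linarith)]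
            norm_num
          rw [show Real.exp (-(1*x)) * l = Real.exp (-x) * l by norm_num, ← h1]
          apply integral_mono_of_nonneg
          · filter_upwards with s; exact norm_nonneg _
          · show IntegrableOn (fun _ => Real.exp (-x)) (Ioo (0:ℝ) l) volume
            rw [integrableOn_const_iff]
            right
            rw [Real.volume_Ioo]
            exact ENNReal.ofReal_lt_top
          · filter_upwards [ae_restrict_mem measurableSet_Ioo] with s hs
            unfold FA
            rw [Real.norm_eq_abs, abs_of_nonneg (mul_nonneg (Real.exp_nonneg _) (ff_nonneg x))]
            calc Real.exp (-(s*x)) * ff x ≤ 1 * Real.exp (-x) := by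
                  apply mul_le_mul _ (ff_le hxpos.le) (ff_nonneg x) zero_le_one
                  rw [Real.exp_le_one_iff, neg_nonpos]
                  exact mul_nonneg hs.1.le hxpos.le
              _ = Real.exp (-x) := one_mul _
        rw [Real.norm_eq_abs, abs_of_nonneg (integral_nonneg (fun s => norm_nonneg _))]
        exact hb
  have hswap := integral_integral_swap hint
  have hL : ∫ x, ∫ s, FA x s ∂ν ∂μ = ∫ x in Ioi (0:ℝ), (1 - Real.exp (-(l*x))) * (1/x) * ff x := by
    apply setIntegral_congr_fun measurableSet_Ioi
    intro x hx
    have hxpos : (0:ℝ) < x := hx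
    unfold FA
    dsimp only
    rw [integral_mul_const]
    show (∫ s in Ioo (0:ℝ) l, Real.exp (-(s*x))) * ff x = _
    rw [exp_integral_Ioo hxpos hl]
    ring
  rw [← hL, hswap]
  rfl


theorem bernstein_inverse_arcsine :
    (∀ l : ℝ, 0 ≤ l →
      ∫ x in Ioi (0:ℝ), (1 - Real.exp (-(l * x))) * (1 / x) *
          (∫ u in Ioo (0:ℝ) 1,
            (1 / (Real.pi * Real.sqrt (u * (1 - u)))) * Real.exp (-(x / u)))
        = 2 * (Real.log (Real.sqrt (1 + l) + 1) - Real.log 2)) ∧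
    (∀ t : ℝ, 0 ≤ t → ∀ l : ℝ, 0 ≤ l →
      Real.exp (-(t * ∫ x in Ioi (0:ℝ), (1 - Real.exp (-(l * x))) * (1 / x) *
          (∫ u in Ioo (0:ℝ) 1,
            (1 / (Real.pi * Real.sqrt (u * (1 - u)))) * Real.exp (-(x / u)))))
        = (2 / (1 + Real.sqrt (1 + l))) ^ (2 * t)) := by
  have key : ∀ l : ℝ, 0 ≤ l →
      ∫ x in Ioi (0:ℝ), (1 - Real.exp (-(l * x))) * (1 / x) *
          (∫ u in Ioo (0:ℝ) 1,
            (1 / (Real.pi * Real.sqrt (u * (1 - u)))) * Real.exp (-(x / u)))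
        = 2 * (Real.log (Real.sqrt (1 + l) + 1) - Real.log 2) := by
    intro l hl
    have hshow : ∫ x in Ioi (0:ℝ), (1 - Real.exp (-(l * x))) * (1 / x) *
          (∫ u in Ioo (0:ℝ) 1,
            (1 / (Real.pi * Real.sqrt (u * (1 - u)))) * Real.exp (-(x / u)))
        = ∫ x in Ioi (0:ℝ), (1 - Real.exp (-(l*x))) * (1/x) * ff x := rfl
    rw [hshow, stepA hl, setIntegral_congr_fun measurableSet_Ioo
      (fun s hs => stepB hs.1), final_integral hl]
  refine ⟨key, ?_⟩
  intro t ht l hl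
  rw [key l hl]
  have h0 : (0:ℝ) ≤ Real.sqrt (1+l) := Real.sqrt_nonneg _
  have hpos : (0:ℝ) < 2 / (1 + Real.sqrt (1+l)) := by positivity
  rw [Real.rpow_def_of_pos hpos, Real.log_div (by norm_num) (by positivity),
    show (1:ℝ) + Real.sqrt (1+l) = Real.sqrt (1+l) + 1 from add_comm _ _]
  congr 1
  ring
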